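/- Let ψ be a continuous frame for H with frame operator S, and let w be a continuous weight on X whose associated weight m := m_w is admissible. Assume both Gramian kernels satisfy ‖G(F,F)‖_{A_m} < ∞ and ‖G(S⁻¹F,S⁻¹F)‖_{A_m} < ∞, where G(F,F)(x,y) = ⟨ψ_y, ψ_x⟩ and G(S⁻¹F,S⁻¹F)(x,y) = ⟨S⁻¹ψ_y, S⁻¹ψ_x⟩. Then for every 1 ≤ p ≤ ∞ and every f ∈ H: ‖Wf‖_{L^p_w} ≤ ‖G(S⁻¹F,S⁻¹F)‖_{A_m} · ‖Vf‖_{L^p_w} and ‖Vf‖_{L^p_w} ≤ ‖G(F,F)‖_{A_m} · ‖Wf‖_{L^p_w}. In particular (p = 1, w = v := m(·,z)), the spaces H¹_v = {f ∈ H : Vf ∈ L¹_v} and K¹_v = {f ∈ H : Wf ∈ L¹_v} coincide with equivalent norms. -/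

import Mathlib

open MeasureTheory ENNReal
open scoped ENNReal NNReal

noncomputable section

local notation "⟪" x ", " y "⟫" => @inner ℂ _ _ x y

/-- The weight on `X × X` associated to a weight `w` on `X`. -/
def mw {X : Type*} (w : X → ℝ) (x y : X) : ℝ :=
  max (w x / w y) (w y / w x)

/-- The norm of the Banach algebra `A_m` of kernels on `X × X`. -/
def amNorm {X : Type*} [MeasurableSpace X] (μ : Measure X) (m K : X → X → ℝ) : ℝ≥0∞ :=
  max (essSup (fun x => ∫⁻ y, ENNReal.ofReal (|K x y| * m x y) ∂μ) μ)
      (essSup (fun y => ∫⁻ x, ENNReal.ofReal (|K x y| * m x y) ∂μ) μ)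

open Filter Function

/-- Schur test, `L^∞` case. -/
lemma schur_top {X : Type*} [MeasurableSpace X] (μ : Measure X)
    (K : X → X → ℝ≥0∞) (hK : Measurable (Function.uncurry K))
    (v : X → ℝ≥0∞) (A : ℝ≥0∞)
    (hrow : ∀ᵐ x ∂μ, ∫⁻ y, K x y ∂μ ≤ A) :
    essSup (fun x => ∫⁻ y, K x y * v y ∂μ) μ ≤ A * essSup v μ := by
  refine essSup_le_of_ae_le _ ?_
  filter_upwards [hrow] with x hx
  calc ∫⁻ y, K x y * v y ∂μ ≤ ∫⁻ y, K x y * essSup v μ ∂μ := by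
        refine lintegral_mono_ae ?_
        filter_upwards [ae_le_essSup v] with y hy using mul_le_mul_right hy _
    _ = (∫⁻ y, K x y ∂μ) * essSup v μ :=
        lintegral_mul_const _ (hK.comp measurable_prodMk_left)
    _ ≤ A * essSup v μ := mul_le_mul_left hx _

/-- Schur test, `L^q` case for finite `q ≥ 1`. -/
lemma schur_rpow {X : Type*} [MeasurableSpace X] (μ : Measure X) [SFinite μ]
    (K : X → X → ℝ≥0∞) (hK : Measurable (Function.uncurry K))
    (v : X → ℝ≥0∞) (hv : Measurable v) (A : ℝ≥0∞) (hA : A ≠ ⊤)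
    (hrow : ∀ᵐ x ∂μ, ∫⁻ y, K x y ∂μ ≤ A)
    (hcol : ∀ᵐ y ∂μ, ∫⁻ x, K x y ∂μ ≤ A)
    (q : ℝ) (hq1 : 1 ≤ q) :
    (∫⁻ x, (∫⁻ y, K x y * v y ∂μ) ^ q ∂μ) ^ (1 / q) ≤
      A * (∫⁻ x, v x ^ q ∂μ) ^ (1 / q) := by
  have hq0 : 0 < q := lt_of_lt_of_le one_pos hq1
  have hvq : Measurable fun y => v y ^ q :=
    (ENNReal.continuous_rpow_const.measurable).comp hv
  have hswap : ∫⁻ x, ∫⁻ y, K x y * v y ^ q ∂μ ∂μ = ∫⁻ y, ∫⁻ x, K x y * v y ^ q ∂μ ∂μ :=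
    lintegral_lintegral_swap ((hK.mul (hvq.comp measurable_snd)).aemeasurable)
  have hinner : ∀ y, ∫⁻ x, K x y * v y ^ q ∂μ = (∫⁻ x, K x y ∂μ) * v y ^ q := fun y =>
    lintegral_mul_const _ (hK.comp measurable_prodMk_right)
  have hcolbound : ∫⁻ x, ∫⁻ y, K x y * v y ^ q ∂μ ∂μ ≤ A * ∫⁻ y, v y ^ q ∂μ := by
    rw [hswap]
    calc ∫⁻ y, ∫⁻ x, K x y * v y ^ q ∂μ ∂μ ≤ ∫⁻ y, A * v y ^ q ∂μ := by
          refine lintegral_mono_ae ?_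
          filter_upwards [hcol] with y hy
          rw [hinner y]; exact mul_le_mul_left hy _
      _ = A * ∫⁻ y, v y ^ q ∂μ := lintegral_const_mul' _ _ hA
  rcases eq_or_lt_of_le hq1 with hq | hq
  · -- q = 1
    subst hq
    simpa [ENNReal.rpow_one] using hcolbound
  · -- 1 < q
    set r := Real.conjExponent q with hr
    have hconj : r.HolderConjugate q := (Real.HolderConjugate.conjExponent hq).symm
    have hqr : q / r = q - 1 := hconj.symm.div_conj_eq_sub_one
    have hr0 : 0 < r := hconj.pos
    -- pointwise Hölder in y
    have hpt : ∀ x, (∫⁻ y, K x y * v y ∂μ) ≤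
        (∫⁻ y, K x y ∂μ) ^ (1 / r) * (∫⁻ y, K x y * v y ^ q ∂μ) ^ (1 / q) := by
      intro x
      have hKx : Measurable fun y => K x y := hK.comp measurable_prodMk_left
      have h1 : ∀ y, K x y * v y = ((fun y => K x y ^ (1/r)) * fun y => K x y ^ (1/q) * v y) y := by
        intro y
        simp only [Pi.mul_apply]
        rw [← mul_assoc, ← ENNReal.rpow_add_of_nonneg _ _ (by positivity) (by positivity)]
        rw [show (1/r + 1/q : ℝ) = 1 by
          rw [one_div, one_div]; exact hconj.inv_add_inv_eq_one]
        rw [ENNReal.rpow_one]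
      calc (∫⁻ y, K x y * v y ∂μ)
          = ∫⁻ y, ((fun y => K x y ^ (1/r)) * fun y => K x y ^ (1/q) * v y) y ∂μ :=
            lintegral_congr h1
        _ ≤ (∫⁻ y, (K x y ^ (1/r)) ^ r ∂μ) ^ (1/r) * (∫⁻ y, (K x y ^ (1/q) * v y) ^ q ∂μ) ^ (1/q) :=
            ENNReal.lintegral_mul_le_Lp_mul_Lq μ hconj
              ((ENNReal.continuous_rpow_const.measurable).comp hKx).aemeasurable
              (((ENNReal.continuous_rpow_const.measurable).comp hKx).mul hv).aemeasurable
        _ = (∫⁻ y, K x y ∂μ) ^ (1/r) * (∫⁻ y, K x y * v y ^ q ∂μ) ^ (1/q) := by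
            congr 1
            · congr 1
              refine lintegral_congr fun y => ?_
              rw [← ENNReal.rpow_mul, one_div_mul_cancel hr0.ne', ENNReal.rpow_one]
            · congr 1
              refine lintegral_congr fun y => ?_
              rw [ENNReal.mul_rpow_of_nonneg _ _ hq0.le, ← ENNReal.rpow_mul,
                one_div_mul_cancel hq0.ne', ENNReal.rpow_one]
    -- raise to power q and integrate
    have hmain : ∫⁻ x, (∫⁻ y, K x y * v y ∂μ) ^ q ∂μ ≤ A ^ q * ∫⁻ y, v y ^ q ∂μ := by
      have hAq1 : A ^ (q - 1) ≠ ⊤ := ENNReal.rpow_ne_top_of_nonneg (by linarith) hA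
      calc ∫⁻ x, (∫⁻ y, K x y * v y ∂μ) ^ q ∂μ
          ≤ ∫⁻ x, A ^ (q-1) * (∫⁻ y, K x y * v y ^ q ∂μ) ∂μ := by
            refine lintegral_mono_ae ?_
            filter_upwards [hrow] with x hx
            calc (∫⁻ y, K x y * v y ∂μ) ^ q
                ≤ ((∫⁻ y, K x y ∂μ) ^ (1 / r) * (∫⁻ y, K x y * v y ^ q ∂μ) ^ (1 / q)) ^ q :=
                  ENNReal.rpow_le_rpow (hpt x) hq0.le
              _ = (∫⁻ y, K x y ∂μ) ^ (q-1) * (∫⁻ y, K x y * v y ^ q ∂μ) := by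
                  rw [ENNReal.mul_rpow_of_nonneg _ _ hq0.le, ← ENNReal.rpow_mul,
                    ← ENNReal.rpow_mul, one_div_mul_cancel hq0.ne', ENNReal.rpow_one,
                    show (1/r) * q = q - 1 by rw [← hqr]; field_simp]
              _ ≤ A ^ (q-1) * (∫⁻ y, K x y * v y ^ q ∂μ) :=
                  mul_le_mul_left (ENNReal.rpow_le_rpow hx (by linarith)) _
        _ = A ^ (q-1) * ∫⁻ x, ∫⁻ y, K x y * v y ^ q ∂μ ∂μ := lintegral_const_mul' _ _ hAq1
        _ ≤ A ^ (q-1) * (A * ∫⁻ y, v y ^ q ∂μ) := mul_le_mul_right hcolbound _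
        _ = A ^ q * ∫⁻ y, v y ^ q ∂μ := by
            rw [← mul_assoc]
            congr 1
            nth_rewrite 2 [← ENNReal.rpow_one A]
            rw [← ENNReal.rpow_add_of_nonneg _ _ (by linarith) zero_le_one]
            norm_num
    calc (∫⁻ x, (∫⁻ y, K x y * v y ∂μ) ^ q ∂μ) ^ (1 / q)
        ≤ (A ^ q * ∫⁻ y, v y ^ q ∂μ) ^ (1 / q) := ENNReal.rpow_le_rpow hmain (by positivity)
      _ = A * (∫⁻ x, v x ^ q ∂μ) ^ (1 / q) := by
          rw [ENNReal.mul_rpow_of_nonneg _ _ (by positivity), ← ENNReal.rpow_mul,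
            mul_one_div_cancel hq0.ne', ENNReal.rpow_one]

lemma key_est {X : Type*} [MeasurableSpace X] (μ : Measure X) [SFinite μ]
    (K : X → X → ℝ≥0∞) (hK : Measurable (Function.uncurry K))
    (A : ℝ≥0∞) (hA : A ≠ ⊤)
    (hrow : ∀ᵐ x ∂μ, ∫⁻ y, K x y ∂μ ≤ A)
    (hcol : ∀ᵐ y ∂μ, ∫⁻ x, K x y ∂μ ≤ A)
    (g h : X → ℝ) (hh : Measurable fun y => (‖h y‖₊ : ℝ≥0∞))
    (hgh : ∀ x, (‖g x‖₊ : ℝ≥0∞) ≤ ∫⁻ y, K x y * (‖h y‖₊ : ℝ≥0∞) ∂μ)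
    (p : ℝ≥0∞) (hp : 1 ≤ p) :
    eLpNorm g p μ ≤ A * eLpNorm h p μ := by
  have hp0 : p ≠ 0 := (lt_of_lt_of_le zero_lt_one hp).ne'
  by_cases hptop : p = ∞
  · subst hptop
    rw [eLpNorm_exponent_top, eLpNorm_exponent_top]
    unfold eLpNormEssSup
    calc essSup (fun x => (‖g x‖₊ : ℝ≥0∞)) μ
        ≤ essSup (fun x => ∫⁻ y, K x y * (‖h y‖₊:ℝ≥0∞) ∂μ) μ :=
          essSup_mono_ae (Filter.Eventually.of_forall hgh)
      _ ≤ A * essSup (fun y => (‖h y‖₊:ℝ≥0∞)) μ := schur_top μ K hK _ A hrow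
  · rw [eLpNorm_eq_lintegral_rpow_enorm_toReal hp0 hptop, eLpNorm_eq_lintegral_rpow_enorm_toReal hp0 hptop]
    have hq1 : 1 ≤ p.toReal := by
      rw [← ENNReal.toReal_one]; exact ENNReal.toReal_mono hptop hp
    calc (∫⁻ x, (‖g x‖₊:ℝ≥0∞) ^ p.toReal ∂μ) ^ (1/p.toReal)
        ≤ (∫⁻ x, (∫⁻ y, K x y * (‖h y‖₊:ℝ≥0∞) ∂μ) ^ p.toReal ∂μ) ^ (1/p.toReal) := by
          gcongr with x
          exact hgh x
      _ ≤ A * (∫⁻ x, (‖h x‖₊:ℝ≥0∞) ^ p.toReal ∂μ) ^ (1/p.toReal) :=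
          schur_rpow μ K hK _ hh A hA hrow hcol _ hq1


lemma measurable_of_weak_cont {X : Type*} [TopologicalSpace X] [MeasurableSpace X]
    [OpensMeasurableSpace X]
    {H : Type*} [NormedAddCommGroup H] [InnerProductSpace ℂ H] [CompleteSpace H]
    [TopologicalSpace.SeparableSpace H] [MeasurableSpace H] [BorelSpace H]
    (ψ : X → H) (hcont : ∀ f : H, Continuous fun x => ⟪ψ x, f⟫) :
    Measurable ψ := by
  haveI : SecondCountableTopology H := UniformSpace.secondCountable_of_separable H
  obtain ⟨wset, b, hb⟩ := exists_hilbertBasis ℂ H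
  obtain ⟨D, hDc, hDd⟩ := TopologicalSpace.exists_countable_dense H
  have hchoice : ∀ x : H, ∃ d ∈ D, dist x d < 1/2 := fun x =>
    hDd.exists_dist_lt x (by norm_num)
  choose gfun hgD hgd using hchoice
  have horth : Orthonormal ℂ ((↑) : wset → H) := hb ▸ b.orthonormal
  have hinj : Set.InjOn gfun wset := by
    intro i hi j hj hij
    by_contra hne
    have h0 : ⟪((⟨i, hi⟩ : wset) : H), ((⟨j, hj⟩ : wset) : H)⟫ = 0 :=
      horth.2 (by simp [Subtype.ext_iff, hne])
    have hni : ‖((⟨i, hi⟩ : wset) : H)‖ = 1 := horth.1 ⟨i, hi⟩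
    have hnj : ‖((⟨j, hj⟩ : wset) : H)‖ = 1 := horth.1 ⟨j, hj⟩
    have hsq : ‖i - j‖ ^ 2 = 2 := by
      have := norm_sub_sq (𝕜 := ℂ) (E := H) i j
      rw [show ⟪i, j⟫ = 0 from h0] at this
      simp only [map_zero, mul_zero, sub_zero] at this
      rw [this, show ‖i‖ = 1 from hni, show ‖j‖ = 1 from hnj]
      norm_num
    have hd1 : 1 ≤ dist i j := by
      have h2 : dist i j ^ 2 = 2 := by rw [dist_eq_norm]; exact hsq
      nlinarith [dist_nonneg (x := i) (y := j)]
    have : dist i j ≤ dist i (gfun i) + dist (gfun j) j := by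
      rw [hij]; exact dist_triangle _ _ _
    have h3 := hgd i
    have h4 := hgd j
    rw [dist_comm (gfun j) j] at this
    linarith
  have hcw : wset.Countable := Set.MapsTo.countable_of_injOn (fun x _ => hgD x) hinj hDc
  haveI := hcw.to_subtype
  have hcoord : ∀ g : H, Measurable fun x => ⟪g, ψ x⟫ := by
    intro g
    have hc : Continuous fun x => (starRingEnd ℂ) ⟪ψ x, g⟫ :=
      RCLike.continuous_conj.comp (hcont g)
    simpa only [inner_conj_symm] using hc.measurable
  have hpart : ∀ s : Finset wset, Measurable fun x => ∑ i ∈ s, ⟪(i : H), ψ x⟫ • (i : H) := by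
    intro s
    refine Finset.measurable_sum _ fun i _ => ?_
    exact ((continuous_id.smul (continuous_const (y := (i : H)))).measurable).comp (hcoord i)
  refine measurable_of_tendsto_metrizable' (atTop : Filter (Finset wset)) hpart ?_
  rw [tendsto_pi_nhds]
  intro x
  have hs := b.hasSum_repr (ψ x)
  have heq : (fun i : wset => b.repr (ψ x) i • b i) =
      fun i : wset => ⟪(i : H), ψ x⟫ • (i : H) := by
    funext i; rw [b.repr_apply_apply, hb]
  rw [heq] at hs
  exact hs

section Main

variable {X : Type*} [TopologicalSpace X] [T2Space X] [LocallyCompactSpace X]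
    [SigmaCompactSpace X] [MeasurableSpace X] [BorelSpace X]
    (μ : Measure X) [μ.Regular]
    {H : Type*} [NormedAddCommGroup H] [InnerProductSpace ℂ H]
    [MeasurableSpace H] [BorelSpace H] [SecondCountableTopology H]

/-- The master estimate. -/
lemma master (a bb : X → H) (ha : Measurable a)
    (w : X → ℝ) (hw : Continuous w) (hwpos : ∀ x, 0 < w x)
    (f : H) (hbf : Continuous fun y => ⟪bb y, f⟫)
    (hrepr : ∀ x, ⟪a x, f⟫ = ∫ y, ⟪bb y, f⟫ * ⟪a x, a y⟫ ∂μ)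
    (hA : amNorm μ (mw w) (fun x y => ‖⟪a x, a y⟫‖) < ⊤)
    (v : X → ℝ) (hv : Continuous v) (hvpos : ∀ x, 0 < v x)
    (hvm : ∀ x y, v x ≤ mw w x y * v y)
    (p : ℝ≥0∞) (hp : 1 ≤ p) :
    eLpNorm (fun x => ‖⟪a x, f⟫‖ * v x) p μ ≤
      amNorm μ (mw w) (fun x y => ‖⟪a x, a y⟫‖) *
        eLpNorm (fun y => ‖⟪bb y, f⟫‖ * v y) p μ := by
  set K : X → X → ℝ≥0∞ := fun x y => (‖⟪a x, a y⟫‖₊ : ℝ≥0∞) * ENNReal.ofReal (mw w x y)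
    with hKdef
  set A : ℝ≥0∞ := amNorm μ (mw w) (fun x y => ‖⟪a x, a y⟫‖) with hAdef
  have hmw_meas : Measurable fun q : X × X => mw w q.1 q.2 :=
    ((hw.measurable.comp measurable_fst).div (hw.measurable.comp measurable_snd)).max
      ((hw.measurable.comp measurable_snd).div (hw.measurable.comp measurable_fst))
  have hmw_nonneg : ∀ x y, 0 ≤ mw w x y := fun x y =>
    le_trans (div_nonneg (hwpos x).le (hwpos y).le) (le_max_left _ _)
  have hKmeas : Measurable (Function.uncurry K) := by
    have h1 : Measurable fun q : X × X => ⟪a q.1, a q.2⟫ :=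
      (ha.comp measurable_fst).inner (ha.comp measurable_snd)
    exact (h1.nnnorm.coe_nnreal_ennreal).mul
      (ENNReal.measurable_ofReal.comp hmw_meas)
  -- amNorm rewriting
  have hint_eq : ∀ x y, ENNReal.ofReal (|‖⟪a x, a y⟫‖| * mw w x y) = K x y := by
    intro x y
    rw [abs_norm, ENNReal.ofReal_mul (norm_nonneg _), ofReal_norm, enorm_eq_nnnorm]
  have hAeq : A = max (essSup (fun x => ∫⁻ y, K x y ∂μ) μ)
      (essSup (fun y => ∫⁻ x, K x y ∂μ) μ) := by
    rw [hAdef]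
    unfold amNorm
    congr 1 <;> · congr 1; funext t; exact lintegral_congr fun s => hint_eq _ _
  have hrow : ∀ᵐ x ∂μ, ∫⁻ y, K x y ∂μ ≤ A := by
    filter_upwards [ae_le_essSup (μ := μ) (fun x => ∫⁻ y, K x y ∂μ)] with x hx
    exact hx.trans (hAeq ▸ le_max_left _ _)
  have hcol : ∀ᵐ y ∂μ, ∫⁻ x, K x y ∂μ ≤ A := by
    filter_upwards [ae_le_essSup (μ := μ) (fun y => ∫⁻ x, K x y ∂μ)] with y hy
    exact hy.trans (hAeq ▸ le_max_right _ _)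
  -- pointwise estimate
  have hofReal : ∀ (t : ℝ) (c : ℂ), 0 ≤ t → (‖(‖c‖ * t)‖₊ : ℝ≥0∞) =
      (‖c‖₊ : ℝ≥0∞) * ENNReal.ofReal t := by
    intro t c ht
    rw [← enorm_eq_nnnorm, ← enorm_eq_nnnorm, ← ofReal_norm, ← ofReal_norm,
      Real.norm_of_nonneg (by positivity), ENNReal.ofReal_mul (norm_nonneg _)]
  have hgh : ∀ x, (‖(‖⟪a x, f⟫‖ * v x)‖₊ : ℝ≥0∞) ≤
      ∫⁻ y, K x y * (‖(‖⟪bb y, f⟫‖ * v y)‖₊ : ℝ≥0∞) ∂μ := by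
    intro x
    rw [hofReal _ _ (hvpos x).le]
    have hvx : ENNReal.ofReal (v x) ≠ ⊤ := ENNReal.ofReal_ne_top
    calc (‖⟪a x, f⟫‖₊ : ℝ≥0∞) * ENNReal.ofReal (v x)
        ≤ (∫⁻ y, (‖⟪bb y, f⟫ * ⟪a x, a y⟫‖₊ : ℝ≥0∞) ∂μ) * ENNReal.ofReal (v x) := by
          refine mul_le_mul_left ?_ _
          rw [hrepr x]
          exact enorm_integral_le_lintegral_enorm _
      _ = ∫⁻ y, (‖⟪bb y, f⟫ * ⟪a x, a y⟫‖₊ : ℝ≥0∞) * ENNReal.ofReal (v x) ∂μ :=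
          (lintegral_mul_const' _ _ hvx).symm
      _ ≤ ∫⁻ y, K x y * (‖(‖⟪bb y, f⟫‖ * v y)‖₊ : ℝ≥0∞) ∂μ := by
          refine lintegral_mono fun y => ?_
          rw [hofReal _ _ (hvpos y).le, nnnorm_mul, ENNReal.coe_mul, hKdef]
          have hle : ENNReal.ofReal (v x) ≤
              ENNReal.ofReal (mw w x y) * ENNReal.ofReal (v y) := by
            rw [← ENNReal.ofReal_mul (hmw_nonneg x y)]
            exact ENNReal.ofReal_le_ofReal (hvm x y)
          calc (‖⟪bb y, f⟫‖₊ : ℝ≥0∞) * (‖⟪a x, a y⟫‖₊ : ℝ≥0∞) * ENNReal.ofReal (v x)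
              ≤ (‖⟪bb y, f⟫‖₊ : ℝ≥0∞) * (‖⟪a x, a y⟫‖₊ : ℝ≥0∞) *
                  (ENNReal.ofReal (mw w x y) * ENNReal.ofReal (v y)) :=
                mul_le_mul_right hle _
            _ = (‖⟪a x, a y⟫‖₊ : ℝ≥0∞) * ENNReal.ofReal (mw w x y) *
                  ((‖⟪bb y, f⟫‖₊ : ℝ≥0∞) * ENNReal.ofReal (v y)) := by ring
  have hh : Measurable fun y => (‖(‖⟪bb y, f⟫‖ * v y)‖₊ : ℝ≥0∞) :=
    ((hbf.norm.mul hv).nnnorm.measurable).coe_nnreal_ennreal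
  exact key_est μ K hKmeas A hA.ne hrow hcol _ _ hh hgh p hp

end Main

/-- If both `G(F,F)` and `G(S⁻¹F,S⁻¹F)` lie in `A_m`, then the transforms
`V` and `W` have equivalent weighted `L^p_w`-norms, with constants given by the respective
kernel norms; in particular `H¹_v = K¹_v` with equivalent norms. -/
theorem localization_implies_equal_coorbits
    {X : Type*} [TopologicalSpace X] [T2Space X] [LocallyCompactSpace X]
    [SigmaCompactSpace X] [MeasurableSpace X] [BorelSpace X]
    (μ : Measure X) [μ.Regular] [μ.IsOpenPosMeasure]
    {H : Type*} [NormedAddCommGroup H] [InnerProductSpace ℂ H] [CompleteSpace H]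
    [TopologicalSpace.SeparableSpace H]
    (ψ : X → H)
    (hcont : ∀ f : H, Continuous fun x => ⟪ψ x, f⟫)
    (C₁ C₂ : ℝ) (hC₁ : 0 < C₁) (hC₁₂ : C₁ ≤ C₂)
    (hInt : ∀ f : H, Integrable (fun x => ‖⟪ψ x, f⟫‖ ^ 2) μ)
    (hlow : ∀ f : H, C₁ * ‖f‖ ^ 2 ≤ ∫ x, ‖⟪ψ x, f⟫‖ ^ 2 ∂μ)
    (hup : ∀ f : H, ∫ x, ‖⟪ψ x, f⟫‖ ^ 2 ∂μ ≤ C₂ * ‖f‖ ^ 2)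
    (S : H →L[ℂ] H)
    (hS : ∀ f g : H, ⟪g, S f⟫ = ∫ x, ⟪ψ x, f⟫ * ⟪g, ψ x⟫ ∂μ)
    (Sinv : H →L[ℂ] H)
    (hleft : ∀ f, Sinv (S f) = f) (hright : ∀ f, S (Sinv f) = f)
    -- a continuous weight with admissible associated weight `m = m_w`
    (w : X → ℝ) (hw : Continuous w) (hwpos : ∀ x, 0 < w x)
    -- `F` and `S⁻¹F` are intrinsically `A_m`-localized
    (hGFF : amNorm μ (mw w) (fun x y => ‖⟪ψ x, ψ y⟫‖) < ⊤)
    (hGSS : amNorm μ (mw w) (fun x y => ‖⟪Sinv (ψ x), Sinv (ψ y)⟫‖) < ⊤) :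
    (∀ p : ℝ≥0∞, 1 ≤ p → ∀ f : H,
      eLpNorm (fun x => ‖⟪Sinv (ψ x), f⟫‖ * w x) p μ ≤
        amNorm μ (mw w) (fun x y => ‖⟪Sinv (ψ x), Sinv (ψ y)⟫‖) *
          eLpNorm (fun x => ‖⟪ψ x, f⟫‖ * w x) p μ ∧
      eLpNorm (fun x => ‖⟪ψ x, f⟫‖ * w x) p μ ≤
        amNorm μ (mw w) (fun x y => ‖⟪ψ x, ψ y⟫‖) *
          eLpNorm (fun x => ‖⟪Sinv (ψ x), f⟫‖ * w x) p μ) ∧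
    -- in particular, with `p = 1` and `v := m(·,z)`:  `H¹_v = K¹_v`
    (∀ z : X, ∀ f : H,
      Integrable (fun x => ‖⟪ψ x, f⟫‖ * mw w x z) μ ↔
        Integrable (fun x => ‖⟪Sinv (ψ x), f⟫‖ * mw w x z) μ) := by
  borelize H
  haveI : SecondCountableTopology H := UniformSpace.secondCountable_of_separable H
  -- self-adjointness of S and S⁻¹
  have hSsa : ∀ f g : H, ⟪S g, f⟫ = ⟪g, S f⟫ := by
    intro f g
    rw [← inner_conj_symm (S g) f, hS g f, ← integral_conj, hS f g]
    congr 1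
    funext x
    rw [map_mul, inner_conj_symm, inner_conj_symm, mul_comm]
  have hSinvsa : ∀ f g : H, ⟪Sinv g, f⟫ = ⟪g, Sinv f⟫ := by
    intro f g
    conv_lhs => rw [← hright f]
    rw [← hSsa (Sinv f) (Sinv g)]
    rw [hright g]
  -- reproducing formulas
  have hW : ∀ (f : H) (x : X), ⟪Sinv (ψ x), f⟫ =
      ∫ y, ⟪ψ y, f⟫ * ⟪Sinv (ψ x), Sinv (ψ y)⟫ ∂μ := by
    intro f x
    have h1 := hS f (Sinv (Sinv (ψ x)))
    have h2 : ⟪Sinv (Sinv (ψ x)), S f⟫ = ⟪Sinv (ψ x), f⟫ := by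
      rw [hSinvsa (S f) (Sinv (ψ x)), hleft f]
    rw [h2] at h1
    rw [h1]
    congr 1
    funext y
    rw [hSinvsa (ψ y) (Sinv (ψ x))]
  have hV : ∀ (f : H) (x : X), ⟪ψ x, f⟫ =
      ∫ y, ⟪Sinv (ψ y), f⟫ * ⟪ψ x, ψ y⟫ ∂μ := by
    intro f x
    have h1 := hS (Sinv f) (ψ x)
    rw [hright f] at h1
    rw [h1]
    congr 1
    funext y
    rw [hSinvsa f (ψ y)]
  -- continuity of the dual-frame coefficients
  have hcontW : ∀ f : H, Continuous fun x => ⟪Sinv (ψ x), f⟫ := by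
    intro f
    have : (fun x => ⟪Sinv (ψ x), f⟫) = fun x => ⟪ψ x, Sinv f⟫ := by
      funext x; rw [hSinvsa f (ψ x)]
    rw [this]; exact hcont (Sinv f)
  -- measurability of the frame maps
  have hmeasψ : Measurable ψ := measurable_of_weak_cont ψ hcont
  have hmeasΦ : Measurable fun x => Sinv (ψ x) :=
    Sinv.continuous.measurable.comp hmeasψ
  -- weight facts
  have hmw1 : ∀ v' : X → ℝ, (∀ x, 0 < v' x) → (∀ x y, v' x ≤ mw w x y * v' y) →
      True := fun _ _ _ => trivial
  have hww : ∀ x y, w x ≤ mw w x y * w y := by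
    intro x y
    have h1 : w x / w y ≤ mw w x y := le_max_left _ _
    have := mul_le_mul_of_nonneg_right h1 (hwpos y).le
    rwa [div_mul_cancel₀ _ (hwpos y).ne'] at this
  have hmwt : ∀ x y z, mw w x z ≤ mw w x y * mw w y z := by
    intro x y z
    have hxy : (0:ℝ) ≤ mw w x y := le_trans (div_nonneg (hwpos x).le (hwpos y).le) (le_max_left _ _)
    have hyz : (0:ℝ) ≤ mw w y z := le_trans (div_nonneg (hwpos y).le (hwpos z).le) (le_max_left _ _)
    refine max_le ?_ ?_
    · have : w x / w z = (w x / w y) * (w y / w z) := by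
        rw [div_mul_div_comm, mul_comm (w x) (w y), mul_div_mul_left _ _ (hwpos y).ne']
      rw [this]
      exact mul_le_mul (le_max_left _ _) (le_max_left _ _)
        (div_nonneg (hwpos y).le (hwpos z).le) hxy
    · have : w z / w x = (w y / w x) * (w z / w y) := by
        rw [div_mul_div_comm, mul_comm (w y) (w z), mul_div_mul_right _ _ (hwpos y).ne']
      rw [this]
      exact mul_le_mul (le_max_right _ _) (le_max_right _ _)
        (div_nonneg (hwpos z).le (hwpos y).le) hxy
  refine ⟨fun p hp f => ⟨?_, ?_⟩, fun z f => ?_⟩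
  · exact master μ (fun x => Sinv (ψ x)) ψ hmeasΦ w hw hwpos f (hcont f) (hW f)
      hGSS w hw hwpos hww p hp
  · exact master μ ψ (fun x => Sinv (ψ x)) hmeasψ w hw hwpos f (hcontW f) (hV f)
      hGFF w hw hwpos hww p hp
  · -- the p = 1, v = mw w · z statement
    set v : X → ℝ := fun x => mw w x z with hvdef
    have hv_cont : Continuous v := by
      refine Continuous.max (hw.div_const _) ?_
      exact continuous_const.div hw fun x => (hwpos x).ne'
    have hv_pos : ∀ x, 0 < v x :=
      fun x => lt_of_lt_of_le (div_pos (hwpos x) (hwpos z)) (le_max_left _ _)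
    have hvm : ∀ x y, v x ≤ mw w x y * v y := fun x y => hmwt x y z
    have hgVcont : Continuous fun x => ‖⟪ψ x, f⟫‖ * v x := ((hcont f).norm).mul hv_cont
    have hgWcont : Continuous fun x => ‖⟪Sinv (ψ x), f⟫‖ * v x := ((hcontW f).norm).mul hv_cont
    have hEW := master μ (fun x => Sinv (ψ x)) ψ hmeasΦ w hw hwpos f (hcont f) (hW f)
      hGSS v hv_cont hv_pos hvm 1 le_rfl
    have hEV := master μ ψ (fun x => Sinv (ψ x)) hmeasψ w hw hwpos f (hcontW f) (hV f)
      hGFF v hv_cont hv_pos hvm 1 le_rfl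
    constructor
    · intro hI
      refine ⟨hgWcont.aestronglyMeasurable, ?_⟩
      have h1 : eLpNorm (fun x => ‖⟪ψ x, f⟫‖ * v x) 1 μ < ⊤ := by
        rw [eLpNorm_one_eq_lintegral_enorm]
        exact hI.hasFiniteIntegral
      have h2 : eLpNorm (fun x => ‖⟪Sinv (ψ x), f⟫‖ * v x) 1 μ < ⊤ :=
        lt_of_le_of_lt hEW (ENNReal.mul_lt_top hGSS h1)
      rw [eLpNorm_one_eq_lintegral_enorm] at h2
      exact h2
    · intro hI
      refine ⟨hgVcont.aestronglyMeasurable, ?_⟩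
      have h1 : eLpNorm (fun x => ‖⟪Sinv (ψ x), f⟫‖ * v x) 1 μ < ⊤ := by
        rw [eLpNorm_one_eq_lintegral_enorm]
        exact hI.hasFiniteIntegral
      have h2 : eLpNorm (fun x => ‖⟪ψ x, f⟫‖ * v x) 1 μ < ⊤ :=
        lt_of_le_of_lt hEV (ENNReal.mul_lt_top hGFF h1)
      rw [eLpNorm_one_eq_lintegral_enorm] at h2
      exact h2
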